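/- Let C be a finite set of vectors in Fin k → Bool. Define the incompatibility graph I(C) as the simple graph whose vertices are the ordered pairs (a, b) of distinct elements of C, with an edge joining (a, b) and (b, a) for every pair of distinct a, b ∈ C, and an edge joining (a, b) and (b, c) whenever there exists a coordinate r ∈ Fin k with a r = true, c r = true and b r = false. Then there exists a CO Boolean matrix with pairwise distinct columns whose set of columns equals C if and only if the graph I(C) is bipartite. -/

import Mathlib

/-- A Boolean row vector has consecutive ones: any entry between two `true`s is `true`. -/
def RowCO {N : ℕ} (v : Fin N → Bool) : Prop :=
  ∀ p q j : Fin N, p ≤ j → j ≤ q → v p = true → v q = true → v j = true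

/-- A Boolean matrix has the consecutive-ones property. -/
def CO {k N : ℕ} (M : Fin k → Fin N → Bool) : Prop := ∀ r, RowCO (M r)

/-- A Boolean matrix has the circular consecutive-ones property:
in each row either the `true` entries or the `false` entries are consecutive. -/
def CCO {k N : ℕ} (M : Fin k → Fin N → Bool) : Prop :=
  ∀ r, RowCO (M r) ∨ RowCO (fun j => !(M r j))

/-- The column of `M` at position `j`. -/
def col {k N : ℕ} (M : Fin k → Fin N → Bool) (j : Fin N) : Fin k → Bool := fun r => M r j

/-- Two Boolean vectors are harmonious if one dominates the other pointwise. -/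
def Harmonious {k : ℕ} (x y : Fin k → Bool) : Prop :=
  (∀ r, x r ≤ y r) ∨ (∀ r, y r ≤ x r)

/-- A harmonious consecutive-ones matrix: CO and every pair of adjacent columns is harmonious. -/
def HCO {k N : ℕ} (M : Fin k → Fin N → Bool) : Prop :=
  CO M ∧ ∀ (j : ℕ) (h : j + 1 < N),
    Harmonious (col M ⟨j, Nat.lt_of_succ_lt h⟩) (col M ⟨j + 1, h⟩)

/-- Vertices of the incompatibility graph: ordered pairs of distinct elements of `C`,
the pair `(a, b)` signifying "`a` is to the left of `b`". -/
def IncompatVert {k : ℕ} (C : Finset (Fin k → Bool)) :=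
  {p : (Fin k → Bool) × (Fin k → Bool) // p.1 ∈ C ∧ p.2 ∈ C ∧ p.1 ≠ p.2}

/-- The (non-symmetrized) incompatibility between `(a, b)` and `(b, c)`: there is a row
where `a` and `c` are `true` while `b` is `false`. -/
def IncompatPairCond {k : ℕ} (u v : (Fin k → Bool) × (Fin k → Bool)) : Prop :=
  u.2 = v.1 ∧ ∃ r, u.1 r = true ∧ v.2 r = true ∧ u.2 r = false

/-- The incompatibility graph of a code `C`. -/
def IncompatGraph {k : ℕ} (C : Finset (Fin k → Bool)) : SimpleGraph (IncompatVert C) where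
  Adj u v := u ≠ v ∧
    ((u.1.1 = v.1.2 ∧ u.1.2 = v.1.1) ∨ IncompatPairCond u.1 v.1 ∨ IncompatPairCond v.1 u.1)
  symm := by
    constructor
    rintro u v ⟨hne, h⟩
    exact ⟨hne.symm, by tauto⟩
  loopless := by
    constructor
    rintro u ⟨hne, -⟩
    exact hne rfl


namespace COBip

variable {k : ℕ}

/-- The betweenness-violation witness. -/
def Rw {k : ℕ} (a b c : Fin k → Bool) : Prop :=
  ∃ r, a r = true ∧ c r = true ∧ b r = false

/-- A list of columns is valid if no betweenness violation occurs. -/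
def ValidL {k : ℕ} (l : List (Fin k → Bool)) : Prop :=
  ∀ a b c, [a, b, c].Sublist l → ¬ Rw a b c

lemma not_after_last {α : Type*} {l : List α} {z b : α} (hn : l.Nodup)
    (hl : l.getLast? = some z) (hs : [z, b].Sublist l) : False := by
  obtain ⟨ys, rfl⟩ := List.getLast?_eq_some_iff.1 hl
  have hzys : z ∉ ys := by
    intro h
    exact (List.nodup_append.1 hn).2.2 z h z (by simp) rfl
  rcases List.sublist_append_iff.1 hs with ⟨s, t, he, hsl, htl⟩
  have htlen : t.length ≤ 1 := by simpa using htl.length_le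
  rcases s with _ | ⟨x, s⟩
  · simp only [List.nil_append] at he
    subst he
    simp at htlen
  · rw [List.cons_append, List.cons.injEq] at he
    obtain ⟨rfl, -⟩ := he
    exact hzys (hsl.subset (by simp))

lemma snoc_last_sublist {α : Type*} {l s : List α} {z : α} (hn : l.Nodup)
    (hl : l.getLast? = some z) (hs : s.Sublist l) (hz : z ∉ s) :
    (s ++ [z]).Sublist l := by
  obtain ⟨ys, rfl⟩ := List.getLast?_eq_some_iff.1 hl
  have hzys : z ∉ ys := by
    intro h
    exact (List.nodup_append.1 hn).2.2 z h z (by simp) rfl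
  rcases List.sublist_append_iff.1 hs with ⟨s1, t, he, hsl, htl⟩
  have ht : t = [] := by
    rcases t with _ | ⟨x, t⟩
    · rfl
    · exfalso
      apply hz
      rw [he]
      have hx : x = z := by
        simpa using htl.subset (show x ∈ x :: t by simp)
      exact List.mem_append_right _ (by simp [hx])
  subst ht
  rw [List.append_nil] at he
  subst he
  exact hsl.append (List.Sublist.refl [z])

lemma glue_valid {k : ℕ} {z : Fin k → Bool} {lL lR : List (Fin k → Bool)}
    (hndL : lL.Nodup) (hndR : lR.Nodup)
    (hlast : lL.getLast? = some z) (hhead : lR.head? = some z)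
    (hvL : ValidL lL) (hvR : ValidL lR)
    (key : ∀ a ∈ lL, ∀ c ∈ lR, a ≠ z → c ≠ z → ¬ Rw a z c) :
    ValidL (lL ++ lR.tail) := by
  obtain ⟨t, rfl⟩ := List.head?_eq_some_iff.1 hhead
  have hzt : z ∉ t := by simpa using (List.nodup_cons.1 hndR).1
  have htR : t.Sublist (z :: t) := List.sublist_cons_self z t
  simp only [List.tail_cons]
  intro a b c hsub hRw
  rcases List.sublist_append_iff.1 hsub with ⟨s, t', he, hsl, htl⟩
  rcases s with _ | ⟨a', s⟩
  · -- all three in lR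
    simp only [List.nil_append] at he
    subst he
    exact hvR a b c (htl.trans htR) hRw
  · rw [List.cons_append, List.cons.injEq] at he
    obtain ⟨rfl, he⟩ := he
    rcases s with _ | ⟨b', s⟩
    · -- s = [a], t' = [b, c]
      simp only [List.nil_append] at he
      subst he
      have hbt : b ∈ t := htl.subset (by simp)
      have hct : c ∈ t := htl.subset (by simp)
      have hbz : b ≠ z := fun h => hzt (h ▸ hbt)
      have hcz : c ≠ z := fun h => hzt (h ▸ hct)
      have haL : a ∈ lL := hsl.subset (by simp)
      by_cases haz : a = z
      · rw [haz] at hRw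
        exact hvR z b c (List.cons_sublist_cons.2 htl) hRw
      · obtain ⟨r, har, hcr, hbr⟩ := hRw
        by_cases hzr : z r = true
        · exact hvR z b c (List.cons_sublist_cons.2 htl) ⟨r, hzr, hcr, hbr⟩
        · exact key a haL c (List.mem_cons_of_mem z hct) haz hcz
            ⟨r, har, hcr, Bool.eq_false_iff.2 hzr⟩
    · rw [List.cons_append, List.cons.injEq] at he
      obtain ⟨rfl, he⟩ := he
      rcases s with _ | ⟨c', s⟩
      · -- s = [a, b], t' = [c]
        simp only [List.nil_append] at he
        subst he
        have hct : c ∈ t := htl.subset (by simp)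
        have hcz : c ≠ z := fun h => hzt (h ▸ hct)
        have haL : a ∈ lL := hsl.subset (by simp)
        by_cases hbz : b = z
        · rw [hbz] at hRw
          have haz : a ≠ z := by
            rintro rfl
            obtain ⟨r, har, hcr, hzr⟩ := hRw
            rw [har] at hzr
            exact Bool.noConfusion hzr
          exact key a haL c (List.mem_cons_of_mem z hct) haz hcz hRw
        · have haz : a ≠ z := by
            rintro rfl
            exact not_after_last hndL hlast hsl
          obtain ⟨r, har, hcr, hbr⟩ := hRw
          by_cases hzr : z r = true
          · have hzs : z ∉ [a, b] := by
              simp only [List.mem_cons, List.not_mem_nil, or_false]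
              push_neg
              exact ⟨Ne.symm haz, Ne.symm hbz⟩
            have hsub3 : ([a, b] ++ [z]).Sublist lL :=
              snoc_last_sublist hndL hlast hsl hzs
            exact hvL a b z (by simpa using hsub3) ⟨r, har, hzr, hbr⟩
          · exact key a haL c (List.mem_cons_of_mem z hct) haz hcz
              ⟨r, har, hcr, Bool.eq_false_iff.2 hzr⟩
      · -- s = [a, b, c], t' = []
        rw [List.cons_append, List.cons.injEq] at he
        obtain ⟨rfl, he⟩ := he
        obtain ⟨hs0, ht0⟩ := List.append_eq_nil_iff.1 he.symm
        subst hs0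
        exact hvL a b c hsl hRw


/-- Optional pin: `u` must be first and beat everything. -/
def PinF {k : ℕ} (T : (Fin k → Bool) → (Fin k → Bool) → Prop)
    (C : Finset (Fin k → Bool)) (u : Option (Fin k → Bool)) : Prop :=
  ∀ x, u = some x → x ∈ C ∧ ∀ y ∈ C, y ≠ x → T x y

/-- Optional pin: `v` must be last and lose to everything. -/
def PinL {k : ℕ} (T : (Fin k → Bool) → (Fin k → Bool) → Prop)
    (C : Finset (Fin k → Bool)) (v : Option (Fin k → Bool)) : Prop :=
  ∀ x, v = some x → x ∈ C ∧ ∀ y ∈ C, y ≠ x → T y x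

def pw {k : ℕ} (u v : Option (Fin k → Bool)) : ℕ :=
  (if u.isSome then 0 else 1) + (if v.isSome then 0 else 1)

lemma validL_of_short {k : ℕ} {l : List (Fin k → Bool)} (h : l.length ≤ 2) :
    ValidL l := by
  intro a b c hsub
  have := hsub.length_le
  simp only [List.length_cons, List.length_nil] at this
  omega

lemma core {k : ℕ} (C₀ : Finset (Fin k → Bool))
    (T : (Fin k → Bool) → (Fin k → Bool) → Prop)
    (hT1 : ∀ a ∈ C₀, ∀ b ∈ C₀, a ≠ b → (T a b ↔ ¬ T b a))
    (hT2 : ∀ a ∈ C₀, ∀ b ∈ C₀, ∀ c ∈ C₀, a ≠ b → b ≠ c → a ≠ c →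
      Rw a b c → (T a b ↔ T c b)) :
    ∀ (n : ℕ) (C : Finset (Fin k → Bool)), C ⊆ C₀ → ∀ u v,
      3 * C.card + pw u v ≤ n → PinF T C u → PinL T C v →
      (∀ a b, u = some a → v = some b → a ≠ b) →
      ∃ l : List (Fin k → Bool), l.Nodup ∧ l.toFinset = C ∧ ValidL l ∧
        (∀ a, u = some a → l.head? = some a) ∧
        (∀ b, v = some b → l.getLast? = some b) := by
  intro n
  induction n with
  | zero =>
    intro C hC u v hm hu hv huv
    exfalso
    have : pw u v = 0 := by omega
    rcases u with _ | u'
    · simp [pw] at this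
    rcases v with _ | v'
    · simp [pw] at this
    have h1 := (hu u' rfl).1
    have hcard : 0 < C.card := Finset.card_pos.2 ⟨u', h1⟩
    omega
  | succ n IH =>
    intro C hC u v hm hu hv huv
    classical
    -- Find a pivot z avoiding the pins, or finish in a base case.
    have hbase : (∃ l : List (Fin k → Bool), l.Nodup ∧ l.toFinset = C ∧ ValidL l ∧
        (∀ a, u = some a → l.head? = some a) ∧
        (∀ b, v = some b → l.getLast? = some b)) ∨
        ∃ z ∈ C, (∀ a, u = some a → z ≠ a) ∧ (∀ b, v = some b → z ≠ b) := by
      rcases u with _ | u' <;> rcases v with _ | v'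
      · by_cases hC0 : C = ∅
        · exact Or.inl ⟨[], by simp, by simp [hC0], validL_of_short (by simp),
            by simp, by simp⟩
        · obtain ⟨z, hz⟩ := Finset.nonempty_iff_ne_empty.2 hC0
          exact Or.inr ⟨z, hz, by simp, by simp⟩
      · by_cases hall : ∀ x ∈ C, x = v'
        · refine Or.inl ⟨[v'], by simp, ?_, validL_of_short (by simp), by simp, ?_⟩
          · have hv' := (hv v' rfl).1
            ext x
            simp only [List.toFinset_cons, List.toFinset_nil, LawfulSingleton.insert_empty_eq,
              Finset.mem_singleton]
            exact ⟨fun h => h ▸ hv', fun h => hall x h⟩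
          · intro b hb
            rw [Option.some.injEq] at hb
            subst hb
            rfl
        · push_neg at hall
          obtain ⟨z, hzC, hzv⟩ := hall
          exact Or.inr ⟨z, hzC, by simp, fun b hb => by
            rw [Option.some.injEq] at hb; exact hb ▸ hzv⟩
      · by_cases hall : ∀ x ∈ C, x = u'
        · refine Or.inl ⟨[u'], by simp, ?_, validL_of_short (by simp), ?_, by simp⟩
          · have hu' := (hu u' rfl).1
            ext x
            simp only [List.toFinset_cons, List.toFinset_nil, LawfulSingleton.insert_empty_eq,
              Finset.mem_singleton]
            exact ⟨fun h => h ▸ hu', fun h => hall x h⟩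
          · intro a ha
            rw [Option.some.injEq] at ha
            subst ha
            rfl
        · push_neg at hall
          obtain ⟨z, hzC, hzu⟩ := hall
          exact Or.inr ⟨z, hzC, fun a ha => by
            rw [Option.some.injEq] at ha; exact ha ▸ hzu, by simp⟩
      · by_cases hall : ∀ x ∈ C, x = u' ∨ x = v'
        · have hne : u' ≠ v' := huv u' v' rfl rfl
          refine Or.inl ⟨[u', v'], by simp [hne], ?_, validL_of_short (by simp),
            ?_, ?_⟩
          · have hu' := (hu u' rfl).1
            have hv' := (hv v' rfl).1
            ext x
            simp only [List.toFinset_cons, List.toFinset_nil, LawfulSingleton.insert_empty_eq,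
              Finset.mem_insert, Finset.mem_singleton]
            constructor
            · rintro (rfl | rfl)
              · exact hu'
              · exact hv'
            · exact fun h => hall x h
          · intro a ha
            rw [Option.some.injEq] at ha
            subst ha
            rfl
          · intro b hb
            rw [Option.some.injEq] at hb
            subst hb
            rfl
        · push_neg at hall
          obtain ⟨z, hzC, hzu, hzv⟩ := hall
          exact Or.inr ⟨z, hzC, fun a ha => by
            rw [Option.some.injEq] at ha; exact ha ▸ hzu, fun b hb => by
            rw [Option.some.injEq] at hb; exact hb ▸ hzv⟩
    rcases hbase with hdone | ⟨z, hzC, hzu, hzv⟩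
    · exact hdone
    -- Main construction
    set L : Finset (Fin k → Bool) := C.filter (fun w => w ≠ z ∧ T w z) with hLdef
    set R : Finset (Fin k → Bool) := C.filter (fun w => w ≠ z ∧ ¬ T w z) with hRdef
    have hmemL : ∀ y, y ∈ L → y ∈ C ∧ y ≠ z ∧ T y z := by
      intro y hy
      simpa [hLdef] using hy
    have hmemR : ∀ y, y ∈ R → y ∈ C ∧ y ≠ z ∧ ¬ T y z := by
      intro y hy
      simpa [hRdef] using hy
    have hpart : ∀ x ∈ C, x = z ∨ x ∈ L ∨ x ∈ R := by
      intro x hx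
      by_cases hxz : x = z
      · exact Or.inl hxz
      · by_cases hT : T x z
        · exact Or.inr (Or.inl (by simp [hLdef, hx, hxz, hT]))
        · exact Or.inr (Or.inr (by simp [hRdef, hx, hxz, hT]))
    have hzL : z ∉ L := fun h => (hmemL z h).2.1 rfl
    have hzR : z ∉ R := fun h => (hmemR z h).2.1 rfl
    have hCLsub : insert z L ⊆ C :=
      Finset.insert_subset hzC (Finset.filter_subset _ _)
    have hCRsub : insert z R ⊆ C :=
      Finset.insert_subset hzC (Finset.filter_subset _ _)
    -- v' is not in insert z L ; u' not in insert z R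
    have hvnotL : ∀ b, v = some b → b ∉ insert z L := by
      intro b hb
      obtain ⟨hbC, hbw⟩ := hv b hb
      have hzb : z ≠ b := hzv b hb
      have hTzb : T z b := hbw z hzC hzb
      intro hmem
      rcases Finset.mem_insert.1 hmem with h | h
      · exact hzb h.symm
      · have := (hmemL b h).2.2
        exact ((hT1 b (hC hbC) z (hC hzC) (Ne.symm hzb)).1 this) hTzb
    have hunotR : ∀ a, u = some a → a ∉ insert z R := by
      intro a ha
      obtain ⟨haC, haw⟩ := hu a ha
      have hza : z ≠ a := hzu a ha
      have hTaz : T a z := haw z hzC hza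
      intro hmem
      rcases Finset.mem_insert.1 hmem with h | h
      · exact hza h.symm
      · exact (hmemR a h).2.2 hTaz
    -- measures
    have hmL : 3 * (insert z L).card + pw u (some z) ≤ n := by
      have hsub : insert z L ⊆ C := hCLsub
      rcases v with _ | v'
      · have : (insert z L).card ≤ C.card := Finset.card_le_card hsub
        simp [pw] at hm ⊢
        omega
      · have hssub : insert z L ⊂ C :=
          Finset.ssubset_iff_of_subset hsub |>.2 ⟨v', (hv v' rfl).1, hvnotL v' rfl⟩
        have : (insert z L).card < C.card := Finset.card_lt_card hssub
        simp [pw] at hm ⊢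
        omega
    have hmR : 3 * (insert z R).card + pw (some z) v ≤ n := by
      have hsub : insert z R ⊆ C := hCRsub
      rcases u with _ | u'
      · have : (insert z R).card ≤ C.card := Finset.card_le_card hsub
        simp [pw] at hm ⊢
        omega
      · have hssub : insert z R ⊂ C :=
          Finset.ssubset_iff_of_subset hsub |>.2 ⟨u', (hu u' rfl).1, hunotR u' rfl⟩
        have : (insert z R).card < C.card := Finset.card_lt_card hssub
        simp [pw] at hm ⊢
        omega
    -- pins for recursive calls
    have hpinFL : PinF T (insert z L) u := by
      intro x hx
      obtain ⟨hxC, hxw⟩ := hu x hx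
      refine ⟨Finset.mem_insert_of_mem ?_, fun y hy hyx => hxw y (hCLsub hy) hyx⟩
      have hzx : z ≠ x := hzu x hx
      exact Finset.mem_filter.2 ⟨hxC, Ne.symm hzx, hxw z hzC hzx⟩
    have hpinLL : PinL T (insert z L) (some z) := by
      intro x hx
      rw [Option.some.injEq] at hx
      subst hx
      refine ⟨Finset.mem_insert_self _ _, fun y hy hyx => ?_⟩
      rcases Finset.mem_insert.1 hy with h | h
      · exact absurd h hyx
      · exact (hmemL y h).2.2
    have hpinFR : PinF T (insert z R) (some z) := by
      intro x hx
      rw [Option.some.injEq] at hx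
      subst hx
      refine ⟨Finset.mem_insert_self _ _, fun y hy hyx => ?_⟩
      rcases Finset.mem_insert.1 hy with h | h
      · exact absurd h hyx
      · obtain ⟨hyC, hyz, hyT⟩ := hmemR y h
        exact ((hT1 z (hC hzC) y (hC hyC) (Ne.symm hyz)).2 hyT)
    have hpinLR : PinL T (insert z R) v := by
      intro x hx
      obtain ⟨hxC, hxw⟩ := hv x hx
      refine ⟨Finset.mem_insert_of_mem ?_, fun y hy hyx => hxw y (hCRsub hy) hyx⟩
      have hzx : z ≠ x := hzv x hx
      have hTzx : T z x := hxw z hzC hzx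
      refine Finset.mem_filter.2 ⟨hxC, Ne.symm hzx, fun hTxz => ?_⟩
      exact ((hT1 x (hC hxC) z (hC hzC) hzx.symm).1 hTxz) hTzx
    -- recursive calls
    obtain ⟨lL, hndL, hfinL, hvL, hheadL, hlastL⟩ :=
      IH (insert z L) (hCLsub.trans hC) u (some z) hmL hpinFL hpinLL
        (fun a b ha hb => by
          rw [Option.some.injEq] at hb
          exact fun h => (hzu a ha) (hb ▸ h.symm))
    obtain ⟨lR, hndR, hfinR, hvR, hheadR, hlastR⟩ :=
      IH (insert z R) (hCRsub.trans hC) (some z) v hmR hpinFR hpinLR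
        (fun a b ha hb => by
          rw [Option.some.injEq] at ha
          exact fun h => (hzv b hb) (ha ▸ h))
    have hlastLz : lL.getLast? = some z := hlastL z rfl
    have hheadRz : lR.head? = some z := hheadR z rfl
    obtain ⟨tR, hlRe⟩ := List.head?_eq_some_iff.1 hheadRz
    have hztR : z ∉ tR := by
      rw [hlRe] at hndR
      simpa using (List.nodup_cons.1 hndR).1
    have htRfin : tR.toFinset = R := by
      ext x
      constructor
      · intro hx
        have hxlR : x ∈ lR.toFinset := by
          rw [hlRe]
          simp only [List.toFinset_cons, Finset.mem_insert]
          exact Or.inr hx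
        rw [hfinR] at hxlR
        rcases Finset.mem_insert.1 hxlR with h | h
        · exact absurd (h ▸ List.mem_toFinset.1 hx) hztR
        · exact h
      · intro hx
        have hxlR : x ∈ lR.toFinset := by
          rw [hfinR]
          exact Finset.mem_insert_of_mem hx
        rw [hlRe] at hxlR
        simp only [List.toFinset_cons, Finset.mem_insert] at hxlR
        rcases hxlR with h | h
        · exact absurd (h ▸ hx) hzR
        · exact h
    -- membership translations
    have hmemlL : ∀ x, x ∈ lL ↔ x ∈ insert z L := by
      intro x
      rw [← hfinL, List.mem_toFinset]
    have hmemtR : ∀ x, x ∈ lR.tail ↔ x ∈ R := by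
      intro x
      rw [hlRe, List.tail_cons, ← htRfin, List.mem_toFinset]
    -- key
    have key : ∀ a ∈ lL, ∀ c ∈ lR, a ≠ z → c ≠ z → ¬ Rw a z c := by
      intro a haL c hcR haz hcz hRw
      have haL' : a ∈ L := by
        rcases Finset.mem_insert.1 ((hmemlL a).1 haL) with h | h
        · exact absurd h haz
        · exact h
      have hcR' : c ∈ R := by
        have : c ∈ lR.toFinset := List.mem_toFinset.2 hcR
        rw [hfinR] at this
        rcases Finset.mem_insert.1 this with h | h
        · exact absurd h hcz
        · exact h
      obtain ⟨haC, -, haT⟩ := hmemL a haL'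
      obtain ⟨hcC, -, hcT⟩ := hmemR c hcR'
      have hac : a ≠ c := fun h => hcT (h ▸ haT)
      have := hT2 a (hC haC) z (hC hzC) c (hC hcC) haz (Ne.symm hcz) hac hRw
      exact hcT (this.1 haT)
    refine ⟨lL ++ lR.tail, ?_, ?_, ?_, ?_, ?_⟩
    · -- Nodup
      rw [List.nodup_append]
      refine ⟨hndL, ?_, ?_⟩
      · rw [hlRe, List.tail_cons]
        rw [hlRe] at hndR
        exact (List.nodup_cons.1 hndR).2
      · intro x hxL y hxT hxy
        subst hxy
        have hx1 := (hmemlL x).1 hxL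
        have hx2 := (hmemtR x).1 hxT
        obtain ⟨-, hxz, hxT'⟩ := hmemR x hx2
        rcases Finset.mem_insert.1 hx1 with h | h
        · exact hxz h
        · exact hxT' (hmemL x h).2.2
    · -- toFinset
      rw [List.toFinset_append, hfinL]
      rw [hlRe, List.tail_cons, htRfin]
      ext x
      simp only [Finset.mem_union, Finset.mem_insert]
      constructor
      · rintro ((rfl | h) | h)
        · exact hzC
        · exact (hmemL x h).1
        · exact (hmemR x h).1
      · intro hx
        rcases hpart x hx with h | h | h
        · exact Or.inl (Or.inl h)
        · exact Or.inl (Or.inr h)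
        · exact Or.inr h
    · exact glue_valid hndL hndR hlastLz hheadRz hvL hvR key
    · -- head?
      intro a ha
      rw [List.head?_append, hheadL a ha]
      rfl
    · -- getLast?
      intro b hb
      have hlastRb : lR.getLast? = some b := hlastR b hb
      have hbz : b ≠ z := fun h => (hzv b hb) h.symm
      have htRne : tR ≠ [] := by
        intro h
        rw [hlRe, h] at hlastRb
        simp only [List.getLast?_singleton, Option.some.injEq] at hlastRb
        exact hbz hlastRb.symm
      have htlast : tR.getLast? = some b := by
        rw [hlRe] at hlastRb
        rcases tR with _ | ⟨x, tR'⟩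
        · exact absurd rfl htRne
        · rwa [List.getLast?_cons_cons] at hlastRb
      rw [List.getLast?_append, hlRe, List.tail_cons, htlast]
      rfl


theorem core_exists {k : ℕ} (C₀ : Finset (Fin k → Bool))
    (T : (Fin k → Bool) → (Fin k → Bool) → Prop)
    (hT1 : ∀ a ∈ C₀, ∀ b ∈ C₀, a ≠ b → (T a b ↔ ¬ T b a))
    (hT2 : ∀ a ∈ C₀, ∀ b ∈ C₀, ∀ c ∈ C₀, a ≠ b → b ≠ c → a ≠ c →
      Rw a b c → (T a b ↔ T c b)) :
    ∃ l : List (Fin k → Bool), l.Nodup ∧ l.toFinset = C₀ ∧ ValidL l := by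
  obtain ⟨l, h1, h2, h3, -, -⟩ := core C₀ T hT1 hT2 (3 * C₀.card + 2) C₀
    (Finset.Subset.refl _) none none (by simp [pw]) (fun x h => by cases h)
    (fun x h => by cases h) (fun a b ha hb => by cases ha)
  exact ⟨l, h1, h2, h3⟩

end COBip

/-- A finite code `C` is the column set of a CO matrix with pairwise distinct columns
iff its incompatibility graph is bipartite (i.e. 2-colorable). -/
theorem CO_ordering_iff_incompatGraph_bipartite (k : ℕ) (C : Finset (Fin k → Bool)) :
    (∃ (N : ℕ) (M : Fin k → Fin N → Bool), CO M ∧ Function.Injective (col M) ∧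
      Set.range (col M) = ↑C) ↔ (IncompatGraph C).Colorable 2 := by
  constructor
  · rintro ⟨N, M, hCO, hinj, hrange⟩
    have hex : ∀ x : Fin k → Bool, x ∈ C → ∃ j, col M j = x := by
      intro x hx
      have : x ∈ Set.range (col M) := by rw [hrange]; exact_mod_cast hx
      exact this
    choose g hg using hex
    have hginj : ∀ x hx y hy, g x hx = g y hy → x = y := by
      intro x hx y hy h
      rw [← hg x hx, ← hg y hy, h]
    set color : IncompatVert C → Fin 2 :=
      fun p => if g p.1.1 p.2.1 < g p.1.2 p.2.2.1 then 0 else 1 with hcolor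
    have hMg : ∀ (x : Fin k → Bool) (hx : x ∈ C) (r : Fin k), M r (g x hx) = x r := by
      intro x hx r
      have := hg x hx
      calc M r (g x hx) = col M (g x hx) r := rfl
        _ = x r := by rw [this]
    have key : ∀ (u v : IncompatVert C), IncompatPairCond u.1 v.1 →
        color u ≠ color v := by
      rintro ⟨⟨a, b⟩, ha, hb, hab⟩ ⟨⟨b', c⟩, hb', hc, hbc⟩ ⟨heq, r, har, hcr, hbr⟩
      simp only at heq har hcr hbr
      subst heq
      simp only [hcolor]
      have hne1 : g a ha ≠ g b hb := fun h => hab (hginj _ _ _ _ h)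
      have hne2 : g b hb' ≠ g c hc := fun h => hbc (hginj _ _ _ _ h)
      have hgb : g b hb = g b hb' := rfl
      have claim1 : ¬ (g a ha < g b hb ∧ g b hb' < g c hc) := by
        rintro ⟨h1, h2⟩
        have := hCO r (g a ha) (g c hc) (g b hb) (le_of_lt h1)
          (le_of_lt (hgb ▸ h2)) (by rw [hMg a ha r]; exact har)
          (by rw [hMg c hc r]; exact hcr)
        rw [hMg b hb r] at this
        rw [this] at hbr
        exact Bool.noConfusion hbr
      have claim2 : ¬ (¬ g a ha < g b hb ∧ ¬ g b hb' < g c hc) := by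
        rintro ⟨h1, h2⟩
        have h1' : g b hb < g a ha := lt_of_le_of_ne (not_lt.1 h1) (Ne.symm hne1)
        have h2' : g c hc < g b hb' := lt_of_le_of_ne (not_lt.1 h2) (Ne.symm hne2)
        have := hCO r (g c hc) (g a ha) (g b hb) (le_of_lt (hgb ▸ h2'))
          (le_of_lt h1') (by rw [hMg c hc r]; exact hcr)
          (by rw [hMg a ha r]; exact har)
        rw [hMg b hb r] at this
        rw [this] at hbr
        exact Bool.noConfusion hbr
      by_cases h1 : g a ha < g b hb <;> by_cases h2 : g b hb' < g c hc <;>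
        simp only [h1, h2, if_true, if_false]
      · exact absurd ⟨h1, h2⟩ claim1
      · decide
      · decide
      · exact absurd ⟨h1, h2⟩ claim2
    refine ⟨SimpleGraph.Coloring.mk color ?_⟩
    rintro u v ⟨hne, hcase | hcond | hcond⟩
    · -- swap case
      obtain ⟨⟨a, b⟩, ha, hb, hab⟩ := u
      obtain ⟨⟨a', b'⟩, ha', hb', hab'⟩ := v
      simp only at hcase
      obtain ⟨h1, h2⟩ := hcase
      subst h1; subst h2
      simp only [hcolor]
      have hne1 : g a ha ≠ g b hb := fun h => hab (hginj _ _ _ _ h)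
      have hgb : g b hb = g b ha' := rfl
      have hga : g a ha = g a hb' := rfl
      rcases lt_or_gt_of_ne hne1 with h | h
      · rw [if_pos h, if_neg (by rw [← hgb, ← hga]; exact not_lt.2 (le_of_lt h))]
        decide
      · rw [if_neg (not_lt.2 (le_of_lt h)), if_pos (by rw [← hgb, ← hga]; exact h)]
        decide
    · exact key u v hcond
    · exact fun h => (key v u hcond) h.symm
  · rintro ⟨χ⟩
    classical
    set T : (Fin k → Bool) → (Fin k → Bool) → Prop :=
      fun a b => ∃ h : a ∈ C ∧ b ∈ C ∧ a ≠ b, χ ⟨(a, b), h⟩ = 0 with hT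
    have fin2_1 : ∀ x y : Fin 2, x ≠ y → (x = 0 ↔ ¬ y = 0) := by decide
    have fin2_2 : ∀ x y w : Fin 2, x ≠ y → w ≠ y → (x = 0 ↔ w = 0) := by decide
    have hTiff : ∀ a b (h : a ∈ C ∧ b ∈ C ∧ a ≠ b), (T a b ↔ χ ⟨(a, b), h⟩ = 0) := by
      intro a b h
      constructor
      · rintro ⟨h', hx⟩
        exact hx
      · intro hx
        exact ⟨h, hx⟩
    have hT1 : ∀ a ∈ C, ∀ b ∈ C, a ≠ b → (T a b ↔ ¬ T b a) := by
      intro a ha b hb hab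
      have hadj : (IncompatGraph C).Adj ⟨(a, b), ⟨ha, hb, hab⟩⟩
          ⟨(b, a), ⟨hb, ha, hab.symm⟩⟩ := by
        refine ⟨?_, Or.inl ⟨rfl, rfl⟩⟩
        intro h
        have h := congrArg Subtype.val h
        simp only [Prod.mk.injEq] at h
        exact hab h.1
      have hχ := χ.valid hadj
      rw [hTiff a b ⟨ha, hb, hab⟩, hTiff b a ⟨hb, ha, hab.symm⟩]
      exact fin2_1 _ _ hχ
    have hT2 : ∀ a ∈ C, ∀ b ∈ C, ∀ c ∈ C, a ≠ b → b ≠ c → a ≠ c →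
        COBip.Rw a b c → (T a b ↔ T c b) := by
      intro a ha b hb c hc hab hbc hac ⟨r, har, hcr, hbr⟩
      have hadj1 : (IncompatGraph C).Adj ⟨(a, b), ⟨ha, hb, hab⟩⟩
          ⟨(b, c), ⟨hb, hc, hbc⟩⟩ := by
        refine ⟨?_, Or.inr (Or.inl ⟨rfl, r, har, hcr, hbr⟩)⟩
        intro h
        have h := congrArg Subtype.val h
        simp only [Prod.mk.injEq] at h
        exact hab h.1
      have hadj2 : (IncompatGraph C).Adj ⟨(c, b), ⟨hc, hb, hbc.symm⟩⟩
          ⟨(b, c), ⟨hb, hc, hbc⟩⟩ := by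
        refine ⟨?_, Or.inl ⟨rfl, rfl⟩⟩
        intro h
        have h := congrArg Subtype.val h
        simp only [Prod.mk.injEq] at h
        exact hbc h.2
      have hχ1 := χ.valid hadj1
      have hχ2 := χ.valid hadj2
      rw [hTiff a b ⟨ha, hb, hab⟩, hTiff c b ⟨hc, hb, hbc.symm⟩]
      exact fin2_2 _ _ _ hχ1 hχ2
    obtain ⟨l, hnd, hfin, hval⟩ := COBip.core_exists C T hT1 hT2
    refine ⟨l.length, fun r j => l.get j r, ?_, ?_, ?_⟩
    · intro r p q j hpj hjq hp hq
      rcases eq_or_lt_of_le hpj with rfl | hpj'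
      · exact hp
      rcases eq_or_lt_of_le hjq with rfl | hjq'
      · exact hq
      by_contra hj
      have hbr : l.get j r = false := by
        simp only at hj
        exact Bool.eq_false_iff.2 hj
      have hsub : [l.get p, l.get j, l.get q].Sublist l := by
        have := List.map_getElem_sublist (l := l) (is := [p, j, q])
          (by simp [List.pairwise_cons]; exact ⟨⟨hpj', lt_trans hpj' hjq'⟩, hjq'⟩)
        simpa using this
      exact hval (l.get p) (l.get j) (l.get q) hsub ⟨r, hp, hq, hbr⟩
    · have : col (fun r (j : Fin l.length) => l.get j r) = l.get := rfl
      rw [this]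
      exact List.nodup_iff_injective_get.1 hnd
    · have hcol : col (fun r (j : Fin l.length) => l.get j r) = l.get := rfl
      rw [hcol]
      ext x
      simp only [Set.mem_range, Finset.mem_coe]
      constructor
      · rintro ⟨j, rfl⟩
        rw [← hfin]
        exact List.mem_toFinset.2 (List.mem_iff_get.2 ⟨j, rfl⟩)
      · intro hx
        rw [← hfin] at hx
        obtain ⟨n, hn⟩ := List.mem_iff_get.1 (List.mem_toFinset.1 hx)
        exact ⟨n, hn⟩
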